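/- Let J be an adapted complex structure on a finite simple graph G, and let a be a non-distinguished edge of G joining the vertices x and y. Then Ja or −Ja is an edge of G adjacent to a; more precisely, at least one of the following holds: (1) Jx or −Jx is a non-isolated vertex x' of G, the edge joining y and x' exists in G, and Ja equals that edge up to sign; or (2) Jy or −Jy is a non-isolated vertex y' of G, the edge joining x and y' exists in G, and Ja equals that edge up to sign. -/
import Mathlib


/-!  Framework: the 2-step nilpotent Lie algebra `𝔫_G` associated to a finite simple
graph `G` (Dani–Mainkar construction), and adapted complex structures on it. -/

open scoped BigOperators

namespace GraphLie

variable {V : Type*} [Fintype V] [LinearOrder V]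

/-- The underlying real vector space of the Lie algebra `𝔫_G` associated to a graph `G`:
real-valued functions on its basis `V ⊕ G.edgeSet` (vertices and edges). -/
abbrev Niln (G : SimpleGraph V) : Type _ := (V ⊕ G.edgeSet) → ℝ

variable (G : SimpleGraph V) [DecidableRel G.Adj]

/-- The basis vector of `𝔫_G` corresponding to the vertex `v`. -/
noncomputable def vtx (v : V) : Niln G := Pi.single (Sum.inl v) 1

/-- The basis vector of `𝔫_G` corresponding to the edge `e`. -/
noncomputable def edg (e : G.edgeSet) : Niln G := Pi.single (Sum.inr e) 1

/-- The basis vector of `𝔫_G` corresponding to a vertex or an edge. -/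
noncomputable def basisVec (b : V ⊕ G.edgeSet) : Niln G := Pi.single b 1

/-- The bracket of two vertex generators: for adjacent vertices `i < j` (with respect to
the chosen labeling of the vertices) `[v_i, v_j] = e_{i,j}` and `[v_j, v_i] = -e_{i,j}`;
non-adjacent vertices commute. -/
noncomputable def bracketVtx (i j : V) : Niln G :=
  if h : G.Adj i j then
    (if i < j then edg G ⟨s(i, j), G.mem_edgeSet.mpr h⟩
     else - edg G ⟨s(i, j), G.mem_edgeSet.mpr h⟩)
  else 0

/-- The Lie bracket of `𝔫_G`, extended bilinearly from the generators; all the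
edge generators are central. -/
noncomputable def bracket (x y : Niln G) : Niln G :=
  ∑ i : V, ∑ j : V, (x (Sum.inl i) * y (Sum.inl j)) • bracketVtx G i j

/-- An adapted complex structure on the graph `G`: a linear endomorphism `J` of `𝔫_G`
with `J ∘ J = -id`, whose Nijenhuis tensor vanishes, and which sends each basis vector
(vertex or edge) to plus or minus a basis vector. -/
structure AdaptedCS : Type _ where
  J : Niln G →ₗ[ℝ] Niln G
  j_squared : ∀ x, J (J x) = -x
  integrable : ∀ x y,
    bracket G x y + J (bracket G (J x) y + bracket G x (J y)) - bracket G (J x) (J y) = 0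
  adapted : ∀ b : V ⊕ G.edgeSet,
    (∃ b', J (basisVec G b) = basisVec G b') ∨ (∃ b', J (basisVec G b) = - basisVec G b')

variable {G}

/-- An edge of `G` joining vertices `v` and `w` is distinguished if `Jv = w` or `Jw = v`. -/
def AdaptedCS.Distinguished (Jc : AdaptedCS G) (e : G.edgeSet) : Prop :=
  ∃ v w : V, (e : Sym2 V) = s(v, w) ∧
    (Jc.J (vtx G v) = vtx G w ∨ Jc.J (vtx G w) = vtx G v)

end GraphLie

namespace GraphLie

variable {V : Type*} [Fintype V] [LinearOrder V] {G : SimpleGraph V} [DecidableRel G.Adj]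

set_option linter.unusedSectionVars false in
@[simp] lemma basisVec_inl (v : V) : basisVec G (Sum.inl v) = vtx G v := rfl

set_option linter.unusedSectionVars false in
@[simp] lemma basisVec_inr (e : G.edgeSet) : basisVec G (Sum.inr e) = edg G e := rfl

lemma adapted' (Jc : AdaptedCS G) (b : V ⊕ G.edgeSet) :
    ∃ (b' : V ⊕ G.edgeSet) (c : ℝ), (c = 1 ∨ c = -1) ∧
      Jc.J (basisVec G b) = c • basisVec G b' := by
  rcases Jc.adapted b with ⟨b', h⟩ | ⟨b', h⟩
  · exact ⟨b', 1, Or.inl rfl, by simpa using h⟩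
  · exact ⟨b', -1, Or.inr rfl, by rw [neg_one_smul]; exact h⟩

lemma bracket_vtx_vtx (v w : V) : bracket G (vtx G v) (vtx G w) = bracketVtx G v w := by
  simp [bracket, vtx, Pi.single_apply, ite_smul, Finset.sum_ite_eq', mul_ite, ite_mul]

lemma bracket_edg_left (e : G.edgeSet) (z : Niln G) : bracket G (edg G e) z = 0 := by
  simp [bracket, edg, Pi.single_apply]

lemma bracket_edg_right (e : G.edgeSet) (z : Niln G) : bracket G z (edg G e) = 0 := by
  simp [bracket, edg, Pi.single_apply]

lemma bracket_smul_left (c : ℝ) (u z : Niln G) :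
    bracket G (c • u) z = c • bracket G u z := by
  simp [bracket, Finset.smul_sum, smul_smul, mul_assoc]

lemma bracket_smul_right (c : ℝ) (u z : Niln G) :
    bracket G z (c • u) = c • bracket G z u := by
  simp [bracket, Finset.smul_sum, smul_smul, mul_left_comm]

set_option linter.unusedSectionVars false in
lemma bracketVtx_adj {v w : V} (h : G.Adj v w) :
    ∃ c : ℝ, (c = 1 ∨ c = -1) ∧
      bracketVtx G v w = c • edg G ⟨s(v, w), G.mem_edgeSet.mpr h⟩ := by
  unfold bracketVtx
  rw [dif_pos h]
  split_ifs
  · exact ⟨1, Or.inl rfl, (one_smul _ _).symm⟩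
  · exact ⟨-1, Or.inr rfl, (neg_one_smul _ _).symm⟩

set_option linter.unusedSectionVars false in
@[simp] lemma edg_apply_inr (e f : G.edgeSet) :
    edg G e (Sum.inr f) = if f = e then 1 else 0 := by
  simp [edg, Pi.single_apply]

set_option linter.unusedSectionVars false in
lemma bracketVtx_apply_ne {v w : V} (e : G.edgeSet) (h : (e : Sym2 V) ≠ s(v, w)) :
    bracketVtx G v w (Sum.inr e) = 0 := by
  unfold bracketVtx
  split_ifs with h1 h2
  · rw [edg_apply_inr, if_neg]
    intro hh; exact h (by rw [hh])
  · simp only [Pi.neg_apply, edg_apply_inr]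
    rw [if_neg, neg_zero]
    intro hh; exact h (by rw [hh])
  · rfl

lemma Jhit (Jc : AdaptedCS G) (a : G.edgeSet) (p q : V)
    (h : (Jc.J (bracketVtx G p q)) (Sum.inr a) ≠ 0) :
    G.Adj p q ∧ ∃ e : G.edgeSet, (e : Sym2 V) = s(p, q) ∧
      (Jc.J (edg G a) = edg G e ∨ Jc.J (edg G a) = - edg G e) := by
  by_cases hpq : G.Adj p q
  swap
  · exfalso; apply h
    rw [bracketVtx, dif_neg hpq, map_zero]; rfl
  refine ⟨hpq, ?_⟩
  obtain ⟨c, hc, hB⟩ := bracketVtx_adj hpq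
  set e : G.edgeSet := ⟨s(p, q), G.mem_edgeSet.mpr hpq⟩ with he
  obtain ⟨b', c', hc', hJ⟩ := adapted' Jc (Sum.inr e)
  rw [basisVec_inr] at hJ
  rw [hB, map_smul, hJ] at h
  have hb' : b' = Sum.inr a := by
    by_contra hb
    apply h
    simp [basisVec, Pi.single_apply, Ne.symm hb]
  subst hb'
  rw [basisVec_inr] at hJ
  have h2 := Jc.j_squared (edg G e)
  rw [hJ, map_smul] at h2
  rcases hc' with rfl | rfl
  · rw [one_smul] at h2
    exact ⟨e, rfl, Or.inr (by rw [h2])⟩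
  · rw [neg_one_smul, neg_eq_iff_eq_neg, neg_neg] at h2
    exact ⟨e, rfl, Or.inl h2⟩

/-- If `a` is a non-distinguished edge of `G` joining the vertices `x`
and `y`, then `±Ja` is an edge of `G` adjacent to `a`: either `±Jx` is a non-isolated
vertex `x'`, the edge joining `y` and `x'` exists in `G`, and `Ja` equals that edge up to
sign; or `±Jy` is a non-isolated vertex `y'`, the edge joining `x` and `y'` exists in
`G`, and `Ja` equals that edge up to sign. -/
theorem statement6 (Jc : AdaptedCS G) (a : G.edgeSet) (x y : V)
    (hxy : (a : Sym2 V) = s(x, y)) (hnd : ¬ Jc.Distinguished a) :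
    (∃ x' : V, 0 < G.degree x' ∧
        (Jc.J (vtx G x) = vtx G x' ∨ Jc.J (vtx G x) = - vtx G x') ∧
        ∃ b : G.edgeSet, (b : Sym2 V) = s(y, x') ∧
          (Jc.J (edg G a) = edg G b ∨ Jc.J (edg G a) = - edg G b)) ∨
    (∃ y' : V, 0 < G.degree y' ∧
        (Jc.J (vtx G y) = vtx G y' ∨ Jc.J (vtx G y) = - vtx G y') ∧
        ∃ b : G.edgeSet, (b : Sym2 V) = s(x, y') ∧
          (Jc.J (edg G a) = edg G b ∨ Jc.J (edg G a) = - edg G b)) := by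
  classical
  have hadj : G.Adj x y := by
    rw [← SimpleGraph.mem_edgeSet, ← hxy]; exact a.2
  have hxyne : x ≠ y := hadj.ne
  obtain ⟨ca, hca, hBa⟩ := bracketVtx_adj hadj
  have hae : (⟨s(x, y), G.mem_edgeSet.mpr hadj⟩ : G.edgeSet) = a := Subtype.ext hxy.symm
  rw [hae] at hBa
  have hca0 : ca ≠ 0 := by rcases hca with rfl | rfl <;> norm_num
  obtain ⟨bx, cx, hcx, hJx⟩ := adapted' Jc (Sum.inl x)
  obtain ⟨bb, cy, hcy, hJy⟩ := adapted' Jc (Sum.inl y)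
  rw [basisVec_inl] at hJx hJy
  have hcx0 : cx ≠ 0 := by rcases hcx with rfl | rfl <;> norm_num
  have hcy0 : cy ≠ 0 := by rcases hcy with rfl | rfl <;> norm_num
  have toPM : ∀ (v v' : V) (c : ℝ), (c = 1 ∨ c = -1) → Jc.J (vtx G v) = c • vtx G v' →
      (Jc.J (vtx G v) = vtx G v' ∨ Jc.J (vtx G v) = - vtx G v') := by
    rintro v v' c (rfl | rfl) h
    · exact Or.inl (by simpa using h)
    · exact Or.inr (by rw [← neg_one_smul ℝ]; exact h)
  have hint := Jc.integrable (vtx G x) (vtx G y)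
  rw [bracket_vtx_vtx, hBa, hJx, hJy] at hint
  simp only [bracket_smul_left, bracket_smul_right, map_add, map_smul] at hint
  rcases bx with x' | ex <;> rcases bb with y' | ey
  · -- both Jx and Jy are (signed) vertices
    simp only [basisVec_inl, bracket_vtx_vtx] at hint
    rw [basisVec_inl] at hJx hJy
    have hx'x : x' ≠ x := by
      intro hxx
      rw [hxx] at hJx
      have h2 := Jc.j_squared (vtx G x)
      rw [hJx, map_smul, hJx, smul_smul] at h2
      have h3 := congrFun h2 (Sum.inl x)
      simp only [Pi.smul_apply, Pi.neg_apply, vtx, Pi.single_apply, if_pos rfl,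
        smul_eq_mul, mul_one] at h3
      rcases hcx with rfl | rfl <;> norm_num at h3
    have hx'y : x' ≠ y := by
      intro hxx
      rw [hxx] at hJx
      apply hnd
      rcases hcx with rfl | rfl
      · exact ⟨x, y, hxy, Or.inl (by simpa using hJx)⟩
      · have h2 := Jc.j_squared (vtx G x)
        rw [hJx, map_smul, neg_one_smul, neg_eq_iff_eq_neg, neg_neg] at h2
        exact ⟨x, y, hxy, Or.inr h2⟩
    have hBne : bracketVtx G x' y' (Sum.inr a) = 0 := by
      apply bracketVtx_apply_ne
      rw [hxy]
      intro hh
      rcases Sym2.eq_iff.mp hh with ⟨h1, _⟩ | ⟨_, h2⟩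
      · exact hx'x h1.symm
      · exact hx'y h2.symm
    have hkey := congrFun hint (Sum.inr a)
    simp only [Pi.add_apply, Pi.sub_apply, Pi.smul_apply, Pi.zero_apply, smul_eq_mul,
      hBne, mul_zero, edg_apply_inr, if_pos rfl, if_true, mul_one, sub_zero] at hkey
    have hor : (Jc.J (bracketVtx G x' y)) (Sum.inr a) ≠ 0 ∨
        (Jc.J (bracketVtx G x y')) (Sum.inr a) ≠ 0 := by
      by_contra hcon
      push_neg at hcon
      rw [hcon.1, hcon.2] at hkey
      simp at hkey
      exact hca0 hkey
    rcases hor with hne | hne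
    · obtain ⟨hadj', e, he, hJe⟩ := Jhit Jc a x' y hne
      exact Or.inl ⟨x', (G.degree_pos_iff_exists_adj x').mpr ⟨y, hadj'⟩,
        toPM x x' cx hcx hJx, e, he.trans Sym2.eq_swap, hJe⟩
    · obtain ⟨hadj', e, he, hJe⟩ := Jhit Jc a x y' hne
      exact Or.inr ⟨y', (G.degree_pos_iff_exists_adj y').mpr ⟨x, hadj'.symm⟩,
        toPM y y' cy hcy hJy, e, he, hJe⟩
  · -- Jx vertex, Jy edge
    simp only [basisVec_inl, basisVec_inr, bracket_vtx_vtx, bracket_edg_left,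
      bracket_edg_right, smul_zero, map_zero, add_zero, sub_zero] at hint
    rw [basisVec_inl] at hJx
    have hne : (Jc.J (bracketVtx G x' y)) (Sum.inr a) ≠ 0 := by
      intro h0
      have hkey := congrFun hint (Sum.inr a)
      simp only [Pi.add_apply, Pi.smul_apply, Pi.zero_apply, smul_eq_mul,
        edg_apply_inr, if_pos rfl, if_true, mul_one, h0, mul_zero, add_zero] at hkey
      exact hca0 hkey
    obtain ⟨hadj', e, he, hJe⟩ := Jhit Jc a x' y hne
    exact Or.inl ⟨x', (G.degree_pos_iff_exists_adj x').mpr ⟨y, hadj'⟩,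
      toPM x x' cx hcx hJx, e, he.trans Sym2.eq_swap, hJe⟩
  · -- Jx edge, Jy vertex
    simp only [basisVec_inl, basisVec_inr, bracket_vtx_vtx, bracket_edg_left,
      bracket_edg_right, smul_zero, map_zero, zero_add, add_zero, sub_zero] at hint
    rw [basisVec_inl] at hJy
    have hne : (Jc.J (bracketVtx G x y')) (Sum.inr a) ≠ 0 := by
      intro h0
      have hkey := congrFun hint (Sum.inr a)
      simp only [Pi.add_apply, Pi.smul_apply, Pi.zero_apply, smul_eq_mul,
        edg_apply_inr, if_pos rfl, if_true, mul_one, h0, mul_zero, add_zero] at hkey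
      exact hca0 hkey
    obtain ⟨hadj', e, he, hJe⟩ := Jhit Jc a x y' hne
    exact Or.inr ⟨y', (G.degree_pos_iff_exists_adj y').mpr ⟨x, hadj'.symm⟩,
      toPM y y' cy hcy hJy, e, he, hJe⟩
  · -- both edges: contradiction
    exfalso
    simp only [basisVec_inr, bracket_edg_left, bracket_edg_right, smul_zero,
      map_zero, add_zero, sub_zero] at hint
    have hkey := congrFun hint (Sum.inr a)
    simp only [Pi.smul_apply, Pi.zero_apply, smul_eq_mul, edg_apply_inr,
      if_pos rfl, if_true, mul_one] at hkey
    exact hca0 hkey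


end GraphLie
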